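/- (Theorem 3.2, existence for the time-discretized problem.) Let 0 < p < 1, p ≤ q ≤ 1, λ > 0, γ > 0, y_d ∈ ℝ^d, x ∈ ℝ^d. Let U ⊂ ℝ^m be compact and convex, and let f_0, f_1, …, f_m : ℝ^d → ℝ^d be Lipschitz continuous with a common constant L. Fix a temporal grid 0 = t_0 < t_1 < ⋯ with t_k → ∞, set I_k = [t_k, t_{k+1}) and b_k = (e^{−λt_k} − e^{−λt_{k+1}})/λ. For a piecewise constant control u with constant value u_k = (u_{1,k}, …, u_{m,k}) ∈ U on each I_k, let y_u : [0, ∞) → ℝ^d denote the unique solution of ẏ(t) = f_0(y(t)) + Σ_{i=1}^m f_i(y(t)) u_i(t), y(0) = x, and define the cost (with values in [0, ∞]) J^Δ(x, u) = ∫₀^∞ e^{−λt} (1/2)‖y_u(t) − y_d‖²₂ dt + γ Σ_{k=0}^∞ b_k (Σ_{i=1}^m |u_{i,k}|^p)^{q/p}. Then there exists a piecewise constant control ū with values in U such that J^Δ(x, ū) ≤ J^Δ(x, u) for every piecewise constant control u with values in U. -/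

import Mathlib

open Set Filter Real MeasureTheory
open scoped Topology NNReal ENNReal


/-- Discount weights `b_k = (e^{-λ t_k} - e^{-λ t_{k+1}})/λ = ∫_{I_k} e^{-λ t} dt`. -/
noncomputable def bcoef (lam : ℝ) (tg : ℕ → ℝ) (k : ℕ) : ℝ :=
  (Real.exp (-lam * tg k) - Real.exp (-lam * tg (k + 1))) / lam

/-- `y` is the trajectory of `ẏ = f₀(y) + Σ_i u_i f_i(y)`, `y(0) = x`, for the piecewise
constant control taking value `v k` on the grid interval `I_k = [t_k, t_{k+1})`. -/
def IsTrajN (d m : ℕ) (f0 : EuclideanSpace ℝ (Fin d) → EuclideanSpace ℝ (Fin d))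
    (f : Fin m → EuclideanSpace ℝ (Fin d) → EuclideanSpace ℝ (Fin d))
    (x : EuclideanSpace ℝ (Fin d)) (tg : ℕ → ℝ)
    (y : ℝ → EuclideanSpace ℝ (Fin d)) (v : ℕ → Fin m → ℝ) : Prop :=
  y 0 = x ∧ ContinuousOn y (Set.Ici 0) ∧
    ∀ k, ∀ t ∈ Set.Ioo (tg k) (tg (k + 1)),
      HasDerivAt y (f0 (y t) + ∑ i, v k i • f i (y t)) t

/-- Cost `J^Δ(x,u) ∈ [0,∞]` of a piecewise constant control `v` with trajectory `y`. -/
noncomputable def JcostE (d m : ℕ) (lam γ p q : ℝ) (yd : EuclideanSpace ℝ (Fin d))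
    (tg : ℕ → ℝ) (y : ℝ → EuclideanSpace ℝ (Fin d)) (v : ℕ → Fin m → ℝ) : ENNReal :=
  (∫⁻ t in Set.Ioi (0 : ℝ), ENNReal.ofReal (Real.exp (-lam * t) * (1 / 2) * ‖y t - yd‖ ^ 2))
    + ENNReal.ofReal (γ * ∑' k, bcoef lam tg k * (∑ i, |v k i| ^ p) ^ (q / p))

section ODEAux
variable {E : Type*} [NormedAddCommGroup E] [NormedSpace ℝ E] [CompleteSpace E]



/-- Short-time existence for a globally Lipschitz autonomous vector field, with a
uniform step size depending only on the Lipschitz constant. -/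
theorem lip_exists_short {v : E → E} {K : ℝ≥0} (hv : LipschitzWith K v) (a : ℝ) (x₀ : E) :
    ∃ y : ℝ → E, y a = x₀ ∧ ∀ t ∈ Icc a (a + (2 * ((K : ℝ) + 1))⁻¹),
      HasDerivWithinAt y (v (y t)) (Icc a (a + (2 * ((K : ℝ) + 1))⁻¹)) t := by
  set h : ℝ := (2 * ((K : ℝ) + 1))⁻¹ with hh
  have hK0 : (0 : ℝ) ≤ K := K.coe_nonneg
  have hhpos : 0 < h := by positivity
  set R : ℝ := 2 * h * (‖v x₀‖ + 1) with hR
  set C : ℝ := ‖v x₀‖ + (K : ℝ) * R with hC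
  have hRpos : 0 ≤ R := by positivity
  have hCpos : 0 ≤ C := by positivity
  have hpl : IsPicardLindelof (fun _ : ℝ => v) (tmin := a) (tmax := a + h)
      ⟨a, le_rfl, by linarith⟩ x₀ ⟨R, hRpos⟩ 0 ⟨C, hCpos⟩ K := by
    refine IsPicardLindelof.of_time_independent ?_ hv.lipschitzOnWith ?_
    · intro z hz
      have h1 : dist (v z) (v x₀) ≤ (K : ℝ) * dist z x₀ := hv.dist_le_mul z x₀
      have h2 : dist z x₀ ≤ R := Metric.mem_closedBall.mp hz
      have : ‖v z‖ ≤ ‖v x₀‖ + dist (v z) (v x₀) := by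
        rw [dist_eq_norm]
        have := norm_add_le (v x₀) (v z - v x₀)
        simpa using this
      have hKR : (K : ℝ) * dist z x₀ ≤ (K : ℝ) * R := by
        exact mul_le_mul_of_nonneg_left h2 hK0
      calc ‖v z‖ ≤ ‖v x₀‖ + (K : ℝ) * dist z x₀ := by linarith
        _ ≤ C := by rw [hC]; linarith
    · simp only [NNReal.coe_mk, NNReal.coe_zero, sub_zero, tsub_zero]
      have hmax : max (a + h - a) (a - a) = h := by
        rw [max_eq_left (by linarith)]; ring
      rw [hmax]
      have hKh : (K : ℝ) * h ≤ 1 / 2 := by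
        rw [hh]
        rw [mul_inv_le_iff₀ (by positivity)]
        nlinarith
      have hnorm : 0 ≤ ‖v x₀‖ := norm_nonneg _
      calc C * h = ‖v x₀‖ * h + ((K : ℝ) * h) * R := by rw [hC]; ring
        _ ≤ ‖v x₀‖ * h + (1/2) * R := by nlinarith
        _ ≤ R := by rw [hR]; nlinarith
  obtain ⟨y, hy0, hy⟩ := hpl.exists_eq_forall_mem_Icc_hasDerivWithinAt₀
  exact ⟨y, hy0, hy⟩

/-- Existence of a solution of `ẏ = v(y)` on an arbitrary compact interval, for a
globally Lipschitz autonomous vector field. -/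
theorem lip_exists_Icc {v : E → E} {K : ℝ≥0} (hv : LipschitzWith K v) (a b : ℝ) (hab : a ≤ b)
    (x₀ : E) :
    ∃ y : ℝ → E, y a = x₀ ∧ ∀ t ∈ Icc a b, HasDerivWithinAt y (v (y t)) (Icc a b) t := by
  set h : ℝ := (2 * ((K : ℝ) + 1))⁻¹ with hh
  have hhpos : 0 < h := by positivity
  -- main claim by induction
  have main : ∀ n : ℕ, ∀ a : ℝ, ∀ x₀ : E, ∃ y : ℝ → E, y a = x₀ ∧
      ∀ t ∈ Icc a (a + (n + 1) * h), HasDerivWithinAt y (v (y t)) (Icc a (a + (n + 1) * h)) t := by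
    intro n
    induction n with
    | zero =>
      intro a x₀
      obtain ⟨y, hy0, hy⟩ := lip_exists_short hv a x₀
      refine ⟨y, hy0, ?_⟩
      have : ((0:ℕ) + 1 : ℝ) * h = h := by push_cast; ring
      rw [this]
      exact hy
    | succ n ih =>
      intro a x₀
      obtain ⟨y1, hy10, hy1⟩ := ih a x₀
      set c : ℝ := a + (n + 1) * h with hc
      obtain ⟨y2, hy20, hy2⟩ := lip_exists_short hv c (y1 c)
      have hac : a ≤ c := by
        rw [hc]; nlinarith [Nat.cast_nonneg (α := ℝ) n]
      have hcb : c ≤ c + h := by linarith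
      set b' : ℝ := a + (n + 1 + 1 : ℕ) * h with hb'
      have hb'c : b' = c + h := by rw [hb', hc]; push_cast; ring
      refine ⟨fun t => if t ≤ c then y1 t else y2 t, by simp [hy10, hac], ?_⟩
      have hIcc : Icc a (a + ((n:ℕ)+1+1 : ℝ) * h) = Icc a b' := by rw [hb']; push_cast; ring_nf
      have hcast : (((n+1:ℕ):ℝ) + 1) = ((n:ℝ) + 1 + 1) := by push_cast; ring
      rw [hcast, hIcc]
      intro t ht
      have hsplit : Icc a b' = Icc a c ∪ Icc c b' := by
        rw [Icc_union_Icc_eq_Icc hac (by rw [hb'c]; linarith)]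
      -- equalities on pieces
      have e1 : EqOn (fun t => if t ≤ c then y1 t else y2 t) y1 (Icc a c) := by
        intro s hs; simp [hs.2]
      have e2 : EqOn (fun t => if t ≤ c then y1 t else y2 t) y2 (Icc c b') := by
        intro s hs
        rcases eq_or_lt_of_le hs.1 with hsc | hsc
        · simp [← hsc, hy20]
        · simp [not_le.mpr hsc]
      have hd1 : ∀ s ∈ Icc a c,
          HasDerivWithinAt (fun t => if t ≤ c then y1 t else y2 t)
            (v ((fun t => if t ≤ c then y1 t else y2 t) s)) (Icc a c) s := by
        intro s hs
        have := (hy1 s hs).congr e1 (e1 hs)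
        simpa [e1 hs] using this
      have hd2 : ∀ s ∈ Icc c b',
          HasDerivWithinAt (fun t => if t ≤ c then y1 t else y2 t)
            (v ((fun t => if t ≤ c then y1 t else y2 t) s)) (Icc c b') s := by
        intro s hs
        have hset : Icc c (c + (2 * ((K:ℝ) + 1))⁻¹) = Icc c b' := by rw [hb'c]
        rw [hset] at hy2
        have := (hy2 s hs).congr e2 (e2 hs)
        simpa [e2 hs] using this
      rcases lt_trichotomy t c with htc | htc | htc
      · have hmem : Icc a c ∈ 𝓝[Icc a b'] t := by
          apply mem_nhdsWithin.mpr
          exact ⟨Iio c, isOpen_Iio, htc, fun s hs => ⟨hs.2.1, le_of_lt hs.1⟩⟩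
        exact (hd1 t ⟨ht.1, le_of_lt htc⟩).mono_of_mem_nhdsWithin hmem
      · have h1 := hd1 t ⟨ht.1, le_of_eq htc⟩
        have h2 := hd2 t ⟨le_of_eq htc.symm, by rw [hb'c]; linarith⟩
        have := h1.union h2
        rwa [← hsplit] at this
      · have hmem : Icc c b' ∈ 𝓝[Icc a b'] t := by
          apply mem_nhdsWithin.mpr
          exact ⟨Ioi c, isOpen_Ioi, htc, fun s hs => ⟨le_of_lt hs.1, hs.2.2⟩⟩
        exact (hd2 t ⟨le_of_lt htc, ht.2⟩).mono_of_mem_nhdsWithin hmem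
  -- choose n big enough
  obtain ⟨n, hn⟩ := Archimedean.arch (b - a) hhpos
  have hble : b ≤ a + (n + 1) * h := by
    have : (b - a) ≤ n * h := by simpa [nsmul_eq_mul] using hn
    nlinarith
  obtain ⟨y, hy0, hy⟩ := main n a x₀
  refine ⟨y, hy0, fun t ht => ?_⟩
  have hsub : Icc a b ⊆ Icc a (a + (n + 1) * h) := Icc_subset_Icc le_rfl hble
  exact (hy t (hsub ht)).mono hsub



/-- Grönwall continuous-dependence estimate assuming derivatives only on the open interval. -/
theorem approx_dist_le {v : E → E} {K : ℝ≥0} (hK : 0 < (K : ℝ)) (hv : LipschitzWith K v)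
    {a b : ℝ} {y z Fy : ℝ → E} {ε : ℝ} (hε : 0 ≤ ε)
    (hyc : ContinuousOn y (Icc a b))
    (hy' : ∀ t ∈ Ioo a b, HasDerivAt y (Fy t) t)
    (hyb : ∀ t ∈ Ioo a b, dist (Fy t) (v (y t)) ≤ ε)
    (hzc : ContinuousOn z (Icc a b))
    (hz' : ∀ t ∈ Ioo a b, HasDerivAt z (v (z t)) t) :
    ∀ t ∈ Icc a b, dist (y t) (z t) ≤
      dist (y a) (z a) * exp (K * (t - a)) + ε / K * (exp (K * (t - a)) - 1) := by
  intro t ht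
  rcases eq_or_lt_of_le ht.1 with hat | hat
  · rw [← hat]; simp
  -- for s ∈ Ioo a t, Gronwall on [s, t]
  have key : ∀ s ∈ Ioo a t, dist (y t) (z t) ≤
      dist (y s) (z s) * exp (K * (t - s)) + ε / K * (exp (K * (t - s)) - 1) := by
    intro s hs
    have hst : s ≤ t := le_of_lt hs.2
    have hIoo : Ico s t ⊆ Ioo a b := fun r hr => ⟨lt_of_lt_of_le hs.1 hr.1, lt_of_lt_of_le hr.2 ht.2⟩
    have hIcc : Icc s t ⊆ Icc a b := Icc_subset_Icc (le_of_lt hs.1) ht.2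
    have h := dist_le_of_approx_trajectories_ODE (v := fun _ : ℝ => v) (K := K)
      (f' := Fy) (g' := fun r => v (z r)) (εf := ε) (εg := 0) (δ := dist (y s) (z s))
      (fun _ => hv) (hyc.mono hIcc)
      (fun r hr => (hy' r (hIoo hr)).hasDerivWithinAt)
      (fun r hr => hyb r (hIoo hr))
      (hzc.mono hIcc)
      (fun r hr => (hz' r (hIoo hr)).hasDerivWithinAt)
      (fun r hr => by simp)
      le_rfl t ⟨hst, le_rfl⟩
    rwa [add_zero, gronwallBound_of_K_ne_0 (ne_of_gt hK)] at h
  -- take the limit s → a⁺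
  haveI : (𝓝[Ioo a t] a).NeBot := by
    apply mem_closure_iff_nhdsWithin_neBot.mp
    rw [closure_Ioo (ne_of_lt hat)]
    exact ⟨le_rfl, le_of_lt hat⟩
  have hsub : Ioo a t ⊆ Icc a b := fun r hr => ⟨le_of_lt hr.1, le_trans (le_of_lt hr.2) ht.2⟩
  have hya : Tendsto y (𝓝[Ioo a t] a) (𝓝 (y a)) :=
    (hyc.continuousWithinAt ⟨le_rfl, le_trans (le_of_lt hat) ht.2⟩).mono hsub
  have hza : Tendsto z (𝓝[Ioo a t] a) (𝓝 (z a)) :=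
    (hzc.continuousWithinAt ⟨le_rfl, le_trans (le_of_lt hat) ht.2⟩).mono hsub
  have hid : Tendsto (fun s : ℝ => s) (𝓝[Ioo a t] a) (𝓝 a) :=
    tendsto_nhdsWithin_of_tendsto_nhds tendsto_id |> fun h => h
  have hexp : Tendsto (fun s : ℝ => exp (K * (t - s))) (𝓝[Ioo a t] a) (𝓝 (exp (K * (t - a)))) := by
    apply Tendsto.comp (Continuous.tendsto Real.continuous_exp _)
    exact (tendsto_const_nhds.mul (tendsto_const_nhds.sub hid))
  have htend : Tendsto (fun s => dist (y s) (z s) * exp (K * (t - s))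
      + ε / K * (exp (K * (t - s)) - 1)) (𝓝[Ioo a t] a)
      (𝓝 (dist (y a) (z a) * exp (K * (t - a)) + ε / K * (exp (K * (t - a)) - 1))) := by
    exact ((hya.dist hza).mul hexp).add (tendsto_const_nhds.mul (hexp.sub tendsto_const_nhds))
  exact ge_of_tendsto htend (eventually_nhdsWithin_of_forall key)

/-- Grönwall a-priori bound assuming derivatives only on the open interval. -/
theorem norm_bound_open {a b : ℝ} {y Fy : ℝ → E} {K C : ℝ} (hK : 0 < K) (hC : 0 ≤ C)
    (hyc : ContinuousOn y (Icc a b))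
    (hy' : ∀ t ∈ Ioo a b, HasDerivAt y (Fy t) t)
    (hyb : ∀ t ∈ Ioo a b, ‖Fy t‖ ≤ K * ‖y t‖ + C) :
    ∀ t ∈ Icc a b, ‖y t‖ ≤ ‖y a‖ * exp (K * (t - a)) + C / K * (exp (K * (t - a)) - 1) := by
  intro t ht
  rcases eq_or_lt_of_le ht.1 with hat | hat
  · rw [← hat]; simp
  have key : ∀ s ∈ Ioo a t, ‖y t‖ ≤
      ‖y s‖ * exp (K * (t - s)) + C / K * (exp (K * (t - s)) - 1) := by
    intro s hs
    have hst : s ≤ t := le_of_lt hs.2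
    have hIoo : Ico s t ⊆ Ioo a b := fun r hr => ⟨lt_of_lt_of_le hs.1 hr.1, lt_of_lt_of_le hr.2 ht.2⟩
    have hIcc : Icc s t ⊆ Icc a b := Icc_subset_Icc (le_of_lt hs.1) ht.2
    have h := norm_le_gronwallBound_of_norm_deriv_right_le (f := y) (f' := Fy)
      (δ := ‖y s‖) (K := K) (ε := C) (a := s) (b := t)
      (hyc.mono hIcc)
      (fun r hr => (hy' r (hIoo hr)).hasDerivWithinAt)
      le_rfl
      (fun r hr => hyb r (hIoo hr)) t ⟨hst, le_rfl⟩
    rwa [gronwallBound_of_K_ne_0 (ne_of_gt hK)] at h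
  haveI : (𝓝[Ioo a t] a).NeBot := by
    apply mem_closure_iff_nhdsWithin_neBot.mp
    rw [closure_Ioo (ne_of_lt hat)]
    exact ⟨le_rfl, le_of_lt hat⟩
  have hsub : Ioo a t ⊆ Icc a b := fun r hr => ⟨le_of_lt hr.1, le_trans (le_of_lt hr.2) ht.2⟩
  have hya : Tendsto y (𝓝[Ioo a t] a) (𝓝 (y a)) :=
    (hyc.continuousWithinAt ⟨le_rfl, le_trans (le_of_lt hat) ht.2⟩).mono hsub
  have hid : Tendsto (fun s : ℝ => s) (𝓝[Ioo a t] a) (𝓝 a) :=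
    tendsto_nhdsWithin_of_tendsto_nhds tendsto_id
  have hexp : Tendsto (fun s : ℝ => exp (K * (t - s))) (𝓝[Ioo a t] a) (𝓝 (exp (K * (t - a)))) := by
    apply Tendsto.comp (Continuous.tendsto Real.continuous_exp _)
    exact (tendsto_const_nhds.mul (tendsto_const_nhds.sub hid))
  have htend : Tendsto (fun s => ‖y s‖ * exp (K * (t - s)) + C / K * (exp (K * (t - s)) - 1))
      (𝓝[Ioo a t] a) (𝓝 (‖y a‖ * exp (K * (t - a)) + C / K * (exp (K * (t - a)) - 1))) :=
    ((hya.norm).mul hexp).add (tendsto_const_nhds.mul (hexp.sub tendsto_const_nhds))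
  exact ge_of_tendsto htend (eventually_nhdsWithin_of_forall key)
end ODEAux

section Problem

variable {d m : ℕ}

/-- The controlled vector field. -/
noncomputable def gvf (f0 : EuclideanSpace ℝ (Fin d) → EuclideanSpace ℝ (Fin d))
    (f : Fin m → EuclideanSpace ℝ (Fin d) → EuclideanSpace ℝ (Fin d))
    (w : Fin m → ℝ) (e : EuclideanSpace ℝ (Fin d)) : EuclideanSpace ℝ (Fin d) :=
  f0 e + ∑ i, w i • f i e

/-- A Lipschitz constant for the controlled vector field. -/
noncomputable def Kof (L : NNReal) (w : Fin m → ℝ) : NNReal :=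
  Real.toNNReal ((L : ℝ) * (1 + ∑ i, |w i|) + 1)

lemma Kof_coe (L : NNReal) (w : Fin m → ℝ) :
    (Kof L w : ℝ) = (L : ℝ) * (1 + ∑ i, |w i|) + 1 := by
  rw [Kof, Real.coe_toNNReal]
  have h1 : (0:ℝ) ≤ ∑ i, |w i| := Finset.sum_nonneg fun i _ => abs_nonneg _
  positivity

lemma Kof_pos (L : NNReal) (w : Fin m → ℝ) : (0 : ℝ) < Kof L w := by
  rw [Kof_coe]
  have h1 : (0:ℝ) ≤ ∑ i, |w i| := Finset.sum_nonneg fun i _ => abs_nonneg _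
  positivity

lemma gvf_sub (f0 : EuclideanSpace ℝ (Fin d) → EuclideanSpace ℝ (Fin d))
    (f : Fin m → EuclideanSpace ℝ (Fin d) → EuclideanSpace ℝ (Fin d))
    (w v : Fin m → ℝ) (e : EuclideanSpace ℝ (Fin d)) :
    gvf f0 f w e - gvf f0 f v e = ∑ i, (w i - v i) • f i e := by
  simp only [gvf, sub_smul]
  rw [Finset.sum_sub_distrib]
  abel

lemma gvf_lip {L : NNReal} {f0 : EuclideanSpace ℝ (Fin d) → EuclideanSpace ℝ (Fin d)}
    {f : Fin m → EuclideanSpace ℝ (Fin d) → EuclideanSpace ℝ (Fin d)}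
    (hf0 : LipschitzWith L f0) (hf : ∀ i, LipschitzWith L (f i)) (w : Fin m → ℝ) :
    LipschitzWith (Kof L w) (gvf f0 f w) := by
  apply LipschitzWith.of_dist_le_mul
  intro e1 e2
  rw [dist_eq_norm]
  have hdiff : gvf f0 f w e1 - gvf f0 f w e2
      = (f0 e1 - f0 e2) + ∑ i, w i • (f i e1 - f i e2) := by
    simp only [gvf, smul_sub]
    rw [Finset.sum_sub_distrib]
    abel
  rw [hdiff]
  have h1 : ‖f0 e1 - f0 e2‖ ≤ (L : ℝ) * dist e1 e2 := by
    rw [← dist_eq_norm]; exact hf0.dist_le_mul e1 e2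
  have h2 : ∀ i : Fin m, ‖w i • (f i e1 - f i e2)‖ ≤ |w i| * ((L : ℝ) * dist e1 e2) := by
    intro i
    rw [norm_smul, Real.norm_eq_abs, ← dist_eq_norm]
    exact mul_le_mul_of_nonneg_left ((hf i).dist_le_mul e1 e2) (abs_nonneg _)
  calc ‖(f0 e1 - f0 e2) + ∑ i, w i • (f i e1 - f i e2)‖
      ≤ ‖f0 e1 - f0 e2‖ + ‖∑ i, w i • (f i e1 - f i e2)‖ := norm_add_le _ _
    _ ≤ (L : ℝ) * dist e1 e2 + ∑ i, |w i| * ((L : ℝ) * dist e1 e2) := by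
        refine add_le_add h1 ((norm_sum_le _ _).trans ?_)
        exact Finset.sum_le_sum fun i _ => h2 i
    _ ≤ (Kof L w : ℝ) * dist e1 e2 := by
        rw [Kof_coe, ← Finset.sum_mul]
        have := dist_nonneg (x := e1) (y := e2)
        nlinarith

variable {f0 : EuclideanSpace ℝ (Fin d) → EuclideanSpace ℝ (Fin d)}
  {f : Fin m → EuclideanSpace ℝ (Fin d) → EuclideanSpace ℝ (Fin d)}
  {L : NNReal} {x : EuclideanSpace ℝ (Fin d)} {tg : ℕ → ℝ}

/-- Uniqueness of partial piecewise trajectories. -/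
theorem uniq_partial (hf0 : LipschitzWith L f0) (hf : ∀ i, LipschitzWith L (f i))
    (htg0 : tg 0 = 0) (htgmono : StrictMono tg) (v : ℕ → Fin m → ℝ) (n : ℕ)
    (y z : ℝ → EuclideanSpace ℝ (Fin d))
    (hy0 : y 0 = x) (hyc : ContinuousOn y (Icc 0 (tg n)))
    (hyd : ∀ k < n, ∀ t ∈ Ioo (tg k) (tg (k + 1)), HasDerivAt y (gvf f0 f (v k) (y t)) t)
    (hz0 : z 0 = x) (hzc : ContinuousOn z (Icc 0 (tg n)))
    (hzd : ∀ k < n, ∀ t ∈ Ioo (tg k) (tg (k + 1)), HasDerivAt z (gvf f0 f (v k) (z t)) t) :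
    EqOn y z (Icc 0 (tg n)) := by
  induction n with
  | zero =>
    intro t ht
    rw [htg0] at ht
    have : t = 0 := le_antisymm ht.2 ht.1
    rw [this, hy0, hz0]
  | succ n ih =>
    have htmono : tg n ≤ tg (n + 1) := le_of_lt (htgmono (lt_add_one n))
    have htn0 : 0 ≤ tg n := htg0 ▸ htgmono.monotone (Nat.zero_le n)
    have hsub : Icc 0 (tg n) ⊆ Icc 0 (tg (n + 1)) := Icc_subset_Icc le_rfl htmono
    have ihh : EqOn y z (Icc 0 (tg n)) :=
      ih (hyc.mono hsub) (fun k hk => hyd k (hk.trans (lt_add_one n)))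
        (hzc.mono hsub) (fun k hk => hzd k (hk.trans (lt_add_one n)))
    have hstep : EqOn y z (Icc (tg n) (tg (n + 1))) := by
      intro t ht
      have hsub2 : Icc (tg n) (tg (n + 1)) ⊆ Icc 0 (tg (n + 1)) := Icc_subset_Icc htn0 le_rfl
      have h := approx_dist_le (Kof_pos L (v n)) (gvf_lip hf0 hf (v n)) le_rfl
        (hyc.mono hsub2) (hyd n (lt_add_one n))
        (fun s hs => by simp) (hzc.mono hsub2) (hzd n (lt_add_one n)) t ht
      have h0 : dist (y (tg n)) (z (tg n)) = 0 := by
        rw [ihh ⟨htn0, le_rfl⟩]; exact dist_self _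
      rw [h0] at h
      simp only [zero_mul, zero_div, zero_add, zero_sub] at h
      have : dist (y t) (z t) ≤ 0 := by simpa using h
      exact dist_le_zero.mp this
    intro t ht
    rcases le_or_gt t (tg n) with h | h
    · exact ihh ⟨ht.1, h⟩
    · exact hstep ⟨le_of_lt h, ht.2⟩

/-- Existence of partial piecewise trajectories. -/
theorem exists_partial (hf0 : LipschitzWith L f0) (hf : ∀ i, LipschitzWith L (f i))
    (htg0 : tg 0 = 0) (htgmono : StrictMono tg) (v : ℕ → Fin m → ℝ) (n : ℕ) :
    ∃ y : ℝ → EuclideanSpace ℝ (Fin d), y 0 = x ∧ ContinuousOn y (Icc 0 (tg n)) ∧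
      ∀ k < n, ∀ t ∈ Ioo (tg k) (tg (k + 1)), HasDerivAt y (gvf f0 f (v k) (y t)) t := by
  induction n with
  | zero =>
    exact ⟨fun _ => x, rfl, continuousOn_const, fun k hk => absurd hk (Nat.not_lt_zero k)⟩
  | succ n ih =>
    obtain ⟨y, hy0, hyc, hyd⟩ := ih
    have htmono : tg n ≤ tg (n + 1) := le_of_lt (htgmono (lt_add_one n))
    have htn0 : 0 ≤ tg n := htg0 ▸ htgmono.monotone (Nat.zero_le n)
    obtain ⟨z, hz0, hzd⟩ := lip_exists_Icc (gvf_lip hf0 hf (v n)) (tg n) (tg (n + 1)) htmono (y (tg n))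
    have hzc : ContinuousOn z (Icc (tg n) (tg (n + 1))) :=
      fun s hs => (hzd s hs).continuousWithinAt
    refine ⟨fun t => if t ≤ tg n then y t else z t, by simp [htn0, hy0], ?_, ?_⟩
    · -- continuity
      have e1 : ∀ s ∈ Icc (0:ℝ) (tg n), (if s ≤ tg n then y s else z s) = y s := fun s hs => if_pos hs.2
      have e2 : ∀ s ∈ Icc (tg n) (tg (n + 1)), (if s ≤ tg n then y s else z s) = z s := by
        intro s hs
        rcases eq_or_lt_of_le hs.1 with h | h
        · rw [if_pos (le_of_eq h.symm), ← h, hz0]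
        · rw [if_neg (not_le.mpr h)]
      intro t ht
      rcases lt_trichotomy t (tg n) with h | h | h
      · have hc : ContinuousWithinAt (fun t => if t ≤ tg n then y t else z t) (Icc 0 (tg n)) t :=
          (hyc.continuousWithinAt ⟨ht.1, le_of_lt h⟩).congr e1 (e1 t ⟨ht.1, le_of_lt h⟩)
        apply hc.mono_of_mem_nhdsWithin
        apply mem_nhdsWithin.mpr
        exact ⟨Iio (tg n), isOpen_Iio, h, fun s hs => ⟨hs.2.1, le_of_lt hs.1⟩⟩
      · have hc1 : ContinuousWithinAt (fun t => if t ≤ tg n then y t else z t) (Icc 0 (tg n)) t :=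
          (hyc.continuousWithinAt (by rw [h]; exact ⟨htn0, le_rfl⟩)).congr e1
            (e1 t (by rw [h]; exact ⟨htn0, le_rfl⟩))
        have hc2 : ContinuousWithinAt (fun t => if t ≤ tg n then y t else z t)
            (Icc (tg n) (tg (n + 1))) t :=
          (hzc.continuousWithinAt (by rw [h]; exact ⟨le_rfl, htmono⟩)).congr e2
            (e2 t (by rw [h]; exact ⟨le_rfl, htmono⟩))
        exact (hc1.union hc2).mono (by rw [Icc_union_Icc_eq_Icc htn0 htmono])
      · have hc : ContinuousWithinAt (fun t => if t ≤ tg n then y t else z t)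
            (Icc (tg n) (tg (n + 1))) t :=
          (hzc.continuousWithinAt ⟨le_of_lt h, ht.2⟩).congr e2 (e2 t ⟨le_of_lt h, ht.2⟩)
        apply hc.mono_of_mem_nhdsWithin
        apply mem_nhdsWithin.mpr
        exact ⟨Ioi (tg n), isOpen_Ioi, h, fun s hs => ⟨le_of_lt hs.1, hs.2.2⟩⟩
    · -- derivatives
      intro k hk t ht
      rcases Nat.lt_succ_iff_lt_or_eq.mp hk with hk' | hk'
      · have htlt : t < tg n := lt_of_lt_of_le ht.2 (htgmono.monotone hk')
        have hev : (fun t => if t ≤ tg n then y t else z t) =ᶠ[𝓝 t] y := by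
          filter_upwards [Iio_mem_nhds htlt] with s hs
          exact if_pos (le_of_lt hs)
        have hd := (hyd k hk' t ht).congr_of_eventuallyEq hev
        have heq : (if t ≤ tg n then y t else z t) = y t := if_pos (le_of_lt htlt)
        show HasDerivAt _ (gvf f0 f (v k) (if t ≤ tg n then y t else z t)) t
        rw [heq]
        exact hd
      · subst hk'
        have hda := (hzd t ⟨le_of_lt ht.1, le_of_lt ht.2⟩).hasDerivAt
          (Icc_mem_nhds ht.1 ht.2)
        have hev : (fun t => if t ≤ tg k then y t else z t) =ᶠ[𝓝 t] z := by
          filter_upwards [Ioi_mem_nhds ht.1] with s hs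
          exact if_neg (not_le.mpr hs)
        have hd := hda.congr_of_eventuallyEq hev
        have heq : (if t ≤ tg k then y t else z t) = z t := if_neg (not_le.mpr ht.1)
        show HasDerivAt _ (gvf f0 f (v k) (if t ≤ tg k then y t else z t)) t
        rw [heq]
        exact hd

/-- Existence of a global piecewise trajectory. -/
theorem exists_traj (hf0 : LipschitzWith L f0) (hf : ∀ i, LipschitzWith L (f i))
    (htg0 : tg 0 = 0) (htgmono : StrictMono tg)
    (htginf : Filter.Tendsto tg Filter.atTop Filter.atTop) (v : ℕ → Fin m → ℝ) :
    ∃ y : ℝ → EuclideanSpace ℝ (Fin d), IsTrajN d m f0 f x tg y v := by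
  classical
  have hpart : ∀ n, ∃ y : ℝ → EuclideanSpace ℝ (Fin d), y 0 = x ∧
      ContinuousOn y (Icc 0 (tg n)) ∧
      ∀ k < n, ∀ t ∈ Ioo (tg k) (tg (k + 1)), HasDerivAt y (gvf f0 f (v k) (y t)) t :=
    fun n => exists_partial hf0 hf htg0 htgmono v n
  choose sol h0 hc hd using hpart
  have hex : ∀ t : ℝ, ∃ n, t ≤ tg n := fun t =>
    (htginf.eventually (eventually_ge_atTop t)).exists
  have hNt : ∀ t, t ≤ tg ((hex t).choose) := fun t => (hex t).choose_spec
  have hagree : ∀ n, EqOn (fun t => sol ((hex t).choose) t) (sol n) (Icc 0 (tg n)) := by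
    intro n t ht
    set j := (hex t).choose with hj
    have htj : t ≤ tg j := hNt t
    have h1 : t ∈ Icc 0 (tg (min j n)) := by
      refine ⟨ht.1, ?_⟩
      rw [htgmono.monotone.map_min]
      exact le_min htj ht.2
    have hminl : tg (min j n) ≤ tg j := htgmono.monotone (min_le_left _ _)
    have hminr : tg (min j n) ≤ tg n := htgmono.monotone (min_le_right _ _)
    exact uniq_partial hf0 hf htg0 htgmono v (min j n) (sol j) (sol n)
      (h0 j) ((hc j).mono (Icc_subset_Icc le_rfl hminl))
      (fun k hk => hd j k (lt_of_lt_of_le hk (min_le_left _ _)))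
      (h0 n) ((hc n).mono (Icc_subset_Icc le_rfl hminr))
      (fun k hk => hd n k (lt_of_lt_of_le hk (min_le_right _ _))) h1
  refine ⟨fun t => sol ((hex t).choose) t, h0 _, ?_, ?_⟩
  · intro t ht
    obtain ⟨n, hn⟩ : ∃ n, t < tg n := (htginf.eventually (eventually_gt_atTop t)).exists
    have hcw : ContinuousWithinAt (fun t => sol ((hex t).choose) t) (Icc 0 (tg n)) t :=
      ((hc n).continuousWithinAt ⟨ht, hn.le⟩).congr (fun s hs => hagree n hs)
        (hagree n ⟨ht, hn.le⟩)
    apply hcw.mono_of_mem_nhdsWithin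
    apply mem_nhdsWithin.mpr
    exact ⟨Iio (tg n), isOpen_Iio, hn, fun s hs => ⟨hs.2, le_of_lt hs.1⟩⟩
  · intro k t ht
    have h0t : 0 < t := lt_of_le_of_lt (htg0 ▸ htgmono.monotone (Nat.zero_le k)) ht.1
    have hmem : t ∈ Icc 0 (tg (k + 1)) := ⟨h0t.le, ht.2.le⟩
    have hev : (fun t => sol ((hex t).choose) t) =ᶠ[𝓝 t] sol (k + 1) := by
      filter_upwards [Ioo_mem_nhds h0t ht.2] with s hs
      exact hagree (k + 1) ⟨hs.1.le, hs.2.le⟩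
    have hd' := (hd (k + 1) k (lt_add_one k) t ht).congr_of_eventuallyEq hev
    have heq : sol ((hex t).choose) t = sol (k + 1) t := hagree (k + 1) hmem
    show HasDerivAt _ (gvf f0 f (v k) (sol ((hex t).choose) t)) t
    rw [heq]
    exact hd'

/-- Uniqueness of global piecewise trajectories. -/
theorem traj_uniqueT (hf0 : LipschitzWith L f0) (hf : ∀ i, LipschitzWith L (f i))
    (htg0 : tg 0 = 0) (htgmono : StrictMono tg)
    (htginf : Filter.Tendsto tg Filter.atTop Filter.atTop) (v : ℕ → Fin m → ℝ)
    (y z : ℝ → EuclideanSpace ℝ (Fin d))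
    (hy : IsTrajN d m f0 f x tg y v) (hz : IsTrajN d m f0 f x tg z v) :
    EqOn y z (Ici 0) := by
  intro t ht
  obtain ⟨n, hn⟩ : ∃ n, t ≤ tg n := (htginf.eventually (eventually_ge_atTop t)).exists
  have hsub : Icc (0:ℝ) (tg n) ⊆ Ici 0 := fun s hs => hs.1
  exact uniq_partial hf0 hf htg0 htgmono v n y z
    hy.1 (hy.2.1.mono hsub) (fun k _ t' ht' => hy.2.2 k t' ht')
    hz.1 (hz.2.1.mono hsub) (fun k _ t' ht' => hz.2.2 k t' ht') ⟨ht, hn⟩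

/-- Recursive a-priori bound along the grid. -/
noncomputable def RbSeq (R0 KU C0 : ℝ) (tg : ℕ → ℝ) : ℕ → ℝ
  | 0 => R0
  | n + 1 => RbSeq R0 KU C0 tg n * Real.exp (KU * (tg (n + 1) - tg n))
      + C0 / KU * (Real.exp (KU * (tg (n + 1) - tg n)) - 1)

lemma RbSeq_nonneg {R0 KU C0 : ℝ} {tg : ℕ → ℝ} (hR0 : 0 ≤ R0) (hKU : 0 < KU) (hC0 : 0 ≤ C0)
    (htgmono : StrictMono tg) : ∀ n, 0 ≤ RbSeq R0 KU C0 tg n := by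
  intro n
  induction n with
  | zero => exact hR0
  | succ n ih =>
    have h1 : (1:ℝ) ≤ Real.exp (KU * (tg (n + 1) - tg n)) := by
      rw [← Real.exp_zero]
      apply Real.exp_le_exp.mpr
      have := le_of_lt (htgmono (lt_add_one n))
      nlinarith
    have h2 : 0 ≤ C0 / KU := by positivity
    simp only [RbSeq]
    nlinarith

/-- A-priori bound for piecewise trajectories. -/
theorem apriori_bound (hf0 : LipschitzWith L f0) (hf : ∀ i, LipschitzWith L (f i))
    (htg0 : tg 0 = 0) (htgmono : StrictMono tg)
    (KU : NNReal) (hKU : 0 < (KU : ℝ)) (C0 : ℝ) (hC0 : 0 ≤ C0) (v : ℕ → Fin m → ℝ)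
    (hU : ∀ k, LipschitzWith KU (gvf f0 f (v k)) ∧ ‖gvf f0 f (v k) 0‖ ≤ C0)
    (y : ℝ → EuclideanSpace ℝ (Fin d)) (hy : IsTrajN d m f0 f x tg y v) :
    ∀ n, ∀ t ∈ Icc 0 (tg n), ‖y t‖ ≤ RbSeq ‖x‖ KU C0 tg n := by
  intro n
  induction n with
  | zero =>
    intro t ht
    rw [htg0] at ht
    have : t = 0 := le_antisymm ht.2 ht.1
    rw [this, hy.1]
    exact le_refl _
  | succ n ih =>
    intro t ht
    have htn0 : 0 ≤ tg n := htg0 ▸ htgmono.monotone (Nat.zero_le n)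
    have htmono : tg n ≤ tg (n + 1) := le_of_lt (htgmono (lt_add_one n))
    have hexp1 : (1:ℝ) ≤ Real.exp ((KU:ℝ) * (tg (n + 1) - tg n)) := by
      rw [← Real.exp_zero]
      apply Real.exp_le_exp.mpr
      nlinarith
    have hRnn := RbSeq_nonneg (norm_nonneg x) hKU hC0 htgmono
    rcases le_or_gt t (tg n) with h | h
    · calc ‖y t‖ ≤ RbSeq ‖x‖ KU C0 tg n := ih t ⟨ht.1, h⟩
        _ ≤ RbSeq ‖x‖ KU C0 tg (n + 1) := by
            simp only [RbSeq]
            have h2 : (0:ℝ) ≤ C0 / KU := by positivity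
            nlinarith [hRnn n]
    · have hb := norm_bound_open (E := EuclideanSpace ℝ (Fin d)) (a := tg n) (b := tg (n + 1))
        (y := y) (Fy := fun s => gvf f0 f (v n) (y s)) hKU hC0
        (hy.2.1.mono (fun s hs => le_trans htn0 hs.1 : Icc (tg n) (tg (n+1)) ⊆ Ici 0))
        (fun s hs => hy.2.2 n s hs)
        (fun s _ => by
          have hlip := (hU n).1.dist_le_mul (y s) 0
          rw [dist_eq_norm, dist_eq_norm, sub_zero] at hlip
          have htri : ‖gvf f0 f (v n) (y s)‖ ≤ ‖gvf f0 f (v n) 0‖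
              + ‖gvf f0 f (v n) (y s) - gvf f0 f (v n) 0‖ := by
            have := norm_add_le (gvf f0 f (v n) 0) (gvf f0 f (v n) (y s) - gvf f0 f (v n) 0)
            simpa using this
          have := (hU n).2
          nlinarith)
        t ⟨le_of_lt h, ht.2⟩
      have hyn : ‖y (tg n)‖ ≤ RbSeq ‖x‖ KU C0 tg n := ih (tg n) ⟨htn0, le_rfl⟩
      have hexpm : Real.exp ((KU:ℝ) * (t - tg n)) ≤ Real.exp ((KU:ℝ) * (tg (n+1) - tg n)) := by
        apply Real.exp_le_exp.mpr
        nlinarith [ht.2]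
      have hexp1' : (1:ℝ) ≤ Real.exp ((KU:ℝ) * (t - tg n)) := by
        rw [← Real.exp_zero]
        apply Real.exp_le_exp.mpr
        nlinarith
      have h2 : (0:ℝ) ≤ C0 / KU := by positivity
      calc ‖y t‖ ≤ ‖y (tg n)‖ * Real.exp ((KU:ℝ) * (t - tg n))
            + C0 / KU * (Real.exp ((KU:ℝ) * (t - tg n)) - 1) := hb
        _ ≤ RbSeq ‖x‖ KU C0 tg n * Real.exp ((KU:ℝ) * (tg (n+1) - tg n))
            + C0 / KU * (Real.exp ((KU:ℝ) * (tg (n+1) - tg n)) - 1) := by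
            nlinarith [hRnn n, norm_nonneg (y (tg n))]
        _ = RbSeq ‖x‖ KU C0 tg (n + 1) := by simp only [RbSeq]

/-- Continuous dependence of trajectories on the control. -/
theorem traj_dep (hf0 : LipschitzWith L f0) (hf : ∀ i, LipschitzWith L (f i))
    (htg0 : tg 0 = 0) (htgmono : StrictMono tg)
    (KU : NNReal) (hKU : 0 < (KU : ℝ))
    (w : ℕ → ℕ → Fin m → ℝ) (vb : ℕ → Fin m → ℝ)
    (y : ℕ → ℝ → EuclideanSpace ℝ (Fin d)) (yb : ℝ → EuclideanSpace ℝ (Fin d))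
    (hyt : ∀ j, IsTrajN d m f0 f x tg (y j) (w j)) (hybt : IsTrajN d m f0 f x tg yb vb)
    (hlip : ∀ k, LipschitzWith KU (gvf f0 f (vb k)))
    (hconv : ∀ k, Tendsto (fun j => w j k) atTop (𝓝 (vb k)))
    (hFB : ∀ n : ℕ, ∃ F : ℝ, 0 ≤ F ∧ ∀ j, ∀ s ∈ Icc (tg n) (tg (n + 1)), ∀ i, ‖f i (y j s)‖ ≤ F) :
    ∀ n, ∀ t ∈ Icc 0 (tg n), Tendsto (fun j => y j t) atTop (𝓝 (yb t)) := by
  intro n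
  induction n with
  | zero =>
    intro t ht
    rw [htg0] at ht
    have ht0 : t = 0 := le_antisymm ht.2 ht.1
    subst ht0
    have : (fun j => y j 0) = fun _ => yb 0 := by
      funext j; rw [(hyt j).1, hybt.1]
    rw [this]
    exact tendsto_const_nhds
  | succ n ih =>
    intro t ht
    have htn0 : 0 ≤ tg n := htg0 ▸ htgmono.monotone (Nat.zero_le n)
    rcases le_or_gt t (tg n) with h | h
    · exact ih t ⟨ht.1, h⟩
    obtain ⟨F, hF0, hFb⟩ := hFB n
    set εj : ℕ → ℝ := fun j => (∑ i, |w j n i - vb n i|) * F with hεj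
    have hεnn : ∀ j, 0 ≤ εj j := fun j =>
      mul_nonneg (Finset.sum_nonneg fun i _ => abs_nonneg _) hF0
    have hε0 : Tendsto εj atTop (𝓝 0) := by
      have hsum : Tendsto (fun j => ∑ i, |w j n i - vb n i|) atTop (𝓝 0) := by
        have : (0:ℝ) = ∑ i : Fin m, (0:ℝ) := by simp
        rw [this]
        apply tendsto_finset_sum
        intro i _
        have hco : Tendsto (fun j => w j n i) atTop (𝓝 (vb n i)) :=
          tendsto_pi_nhds.mp (hconv n) i
        have h2 := Tendsto.abs (hco.sub (tendsto_const_nhds (x := vb n i)))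
        simpa using h2
      have := hsum.mul_const F
      simpa using this
    have key : ∀ j, dist (y j t) (yb t) ≤ dist (y j (tg n)) (yb (tg n))
        * Real.exp ((KU:ℝ) * (t - tg n)) + εj j / KU * (Real.exp ((KU:ℝ) * (t - tg n)) - 1) := by
      intro j
      have hsubI : Icc (tg n) t ⊆ Ici (0:ℝ) := fun s hs => le_trans htn0 hs.1
      have hIoo : Ioo (tg n) t ⊆ Ioo (tg n) (tg (n + 1)) := fun s hs =>
        ⟨hs.1, lt_of_lt_of_le hs.2 ht.2⟩
      refine approx_dist_le hKU (hlip n) (hεnn j)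
        ((hyt j).2.1.mono hsubI)
        (fun s hs => (hyt j).2.2 n s (hIoo hs))
        (fun s hs => ?_)
        (hybt.2.1.mono hsubI)
        (fun s hs => hybt.2.2 n s (hIoo hs))
        t ⟨le_of_lt h, le_rfl⟩
      · -- field deviation bound
        rw [dist_eq_norm]
        have hrw : (f0 (y j s) + ∑ i, w j n i • f i (y j s))
            - (f0 (y j s) + ∑ i, vb n i • f i (y j s))
            = ∑ i, (w j n i - vb n i) • f i (y j s) := gvf_sub f0 f (w j n) (vb n) (y j s)
        rw [show gvf f0 f (vb n) (y j s) = f0 (y j s) + ∑ i, vb n i • f i (y j s) from rfl, hrw]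
        have hsm : ∀ i : Fin m, ‖(w j n i - vb n i) • f i (y j s)‖ ≤ |w j n i - vb n i| * F := by
          intro i
          rw [norm_smul, Real.norm_eq_abs]
          exact mul_le_mul_of_nonneg_left
            (hFb j s ⟨le_of_lt (hIoo hs).1, le_of_lt (hIoo hs).2⟩ i) (abs_nonneg _)
        calc ‖∑ i, (w j n i - vb n i) • f i (y j s)‖
            ≤ ∑ i, ‖(w j n i - vb n i) • f i (y j s)‖ := norm_sum_le _ _
          _ ≤ ∑ i, |w j n i - vb n i| * F := Finset.sum_le_sum fun i _ => hsm i
          _ = εj j := by simp [hεj, Finset.sum_mul]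
    have hδ : Tendsto (fun j => dist (y j (tg n)) (yb (tg n))) atTop (𝓝 0) := by
      have := (ih (tg n) ⟨htn0, le_rfl⟩).dist (tendsto_const_nhds (x := yb (tg n)))
      simpa using this
    have hrhs : Tendsto (fun j => dist (y j (tg n)) (yb (tg n))
        * Real.exp ((KU:ℝ) * (t - tg n)) + εj j / KU * (Real.exp ((KU:ℝ) * (t - tg n)) - 1))
        atTop (𝓝 0) := by
      have h1 := hδ.mul_const (Real.exp ((KU:ℝ) * (t - tg n)))
      have h2 := (hε0.div_const (KU:ℝ)).mul_const (Real.exp ((KU:ℝ) * (t - tg n)) - 1)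
      have := h1.add h2
      simpa using this
    rw [tendsto_iff_dist_tendsto_zero]
    exact squeeze_zero (fun j => dist_nonneg) key hrhs

end Problem

section CostAux

lemma ennreal_liminf_add {u v : ℕ → ℝ≥0∞} :
    Filter.liminf u Filter.atTop + Filter.liminf v Filter.atTop
      ≤ Filter.liminf (fun n => u n + v n) Filter.atTop := by
  rw [Filter.liminf_eq_iSup_iInf_of_nat, Filter.liminf_eq_iSup_iInf_of_nat,
    Filter.liminf_eq_iSup_iInf_of_nat]
  have hm : ∀ w : ℕ → ℝ≥0∞, Monotone (fun n => ⨅ i ≥ n, w i) := by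
    intro w n1 n2 h
    exact le_iInf₂ fun i hi => iInf₂_le i (le_trans h hi)
  rw [ENNReal.iSup_add_iSup_of_monotone (hm u) (hm v)]
  apply iSup_mono
  intro n
  exact le_iInf₂ fun i hi => add_le_add (iInf₂_le i hi) (iInf₂_le i hi)

lemma tsum_liminf_le {F : ℕ → ℕ → ℝ≥0∞} :
    ∑' k, Filter.liminf (fun j => F j k) Filter.atTop
      ≤ Filter.liminf (fun j => ∑' k, F j k) Filter.atTop := by
  have h1 : ∑' k, Filter.liminf (fun j => F j k) Filter.atTop
      = ∫⁻ k, Filter.liminf (fun j => F j k) Filter.atTop ∂(Measure.count) :=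
    (lintegral_count _).symm
  rw [h1]
  have h2 := lintegral_liminf_le (μ := Measure.count) (f := F) (u := atTop)
    (fun _ => Measurable.of_discrete)
  refine h2.trans (le_of_eq ?_)
  have h3 : (fun j => ∫⁻ k, F j k ∂Measure.count) = fun j => ∑' k, F j k :=
    funext fun j => lintegral_count _
  rw [h3]

lemma bcoef_nonneg {lam : ℝ} {tg : ℕ → ℝ} (hlam : 0 < lam) (htgmono : StrictMono tg) (k : ℕ) :
    0 ≤ bcoef lam tg k := by
  unfold bcoef
  apply div_nonneg _ hlam.le
  have h := Real.exp_le_exp.mpr (show -lam * tg (k + 1) ≤ -lam * tg k by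
    nlinarith [le_of_lt (htgmono (lt_add_one k))])
  linarith

lemma bcoef_summable {lam : ℝ} {tg : ℕ → ℝ} (hlam : 0 < lam) (htg0 : tg 0 = 0)
    (htgmono : StrictMono tg) : Summable (bcoef lam tg) := by
  apply summable_of_sum_range_le (c := 1 / lam) (fun k => bcoef_nonneg hlam htgmono k)
  intro n
  have h : ∑ k ∈ Finset.range n, bcoef lam tg k
      = (Real.exp (-lam * tg 0) - Real.exp (-lam * tg n)) / lam := by
    unfold bcoef
    rw [← Finset.sum_div, Finset.sum_range_sub' (f := fun k => Real.exp (-lam * tg k))]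
  rw [h, htg0]
  rw [show -lam * (0:ℝ) = 0 by ring, Real.exp_zero]
  exact (div_le_div_iff_of_pos_right hlam).mpr (by linarith [(Real.exp_pos (-lam * tg n)).le])

lemma ofReal_tsum_bcoef {lam γ MP : ℝ} {tg : ℕ → ℝ} (hlam : 0 < lam) (htg0 : tg 0 = 0)
    (htgmono : StrictMono tg) (hγ : 0 < γ) (b : ℕ → ℝ) (hb0 : ∀ k, 0 ≤ b k)
    (hbM : ∀ k, b k ≤ MP) :
    ENNReal.ofReal (γ * ∑' k, bcoef lam tg k * b k)
      = ∑' k, ENNReal.ofReal (γ * (bcoef lam tg k * b k)) := by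
  have hbnn := fun k => bcoef_nonneg (tg := tg) hlam htgmono k
  have hsum : Summable (fun k => bcoef lam tg k * b k) :=
    Summable.of_nonneg_of_le (fun k => mul_nonneg (hbnn k) (hb0 k))
      (fun k => mul_le_mul_of_nonneg_left (hbM k) (hbnn k))
      ((bcoef_summable hlam htg0 htgmono).mul_right MP)
  rw [← tsum_mul_left]
  exact ENNReal.ofReal_tsum_of_nonneg
    (fun k => mul_nonneg hγ.le (mul_nonneg (hbnn k) (hb0 k))) (hsum.mul_left γ)

end CostAux


open scoped Classical in
/-- Theorem 3.2: existence of a minimizer of the time-discretized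
infinite horizon problem among piecewise constant controls with values in `U`. -/
theorem exists_piecewise_constant_minimizer
    (d m : ℕ) (p q lam γ : ℝ) (hp0 : 0 < p) (hp1 : p < 1) (hpq : p ≤ q) (hq1 : q ≤ 1)
    (hlam : 0 < lam) (hγ : 0 < γ)
    (yd x : EuclideanSpace ℝ (Fin d))
    (U : Set (Fin m → ℝ)) (hUc : IsCompact U) (hUconv : Convex ℝ U) (hUne : U.Nonempty)
    (f0 : EuclideanSpace ℝ (Fin d) → EuclideanSpace ℝ (Fin d))
    (f : Fin m → EuclideanSpace ℝ (Fin d) → EuclideanSpace ℝ (Fin d))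
    (L : NNReal) (hf0 : LipschitzWith L f0) (hf : ∀ i, LipschitzWith L (f i))
    (tg : ℕ → ℝ) (htg0 : tg 0 = 0) (htgmono : StrictMono tg)
    (htginf : Filter.Tendsto tg Filter.atTop Filter.atTop) :
    ∃ (ubar : ℕ → Fin m → ℝ) (ybar : ℝ → EuclideanSpace ℝ (Fin d)),
      (∀ k, ubar k ∈ U) ∧ IsTrajN d m f0 f x tg ybar ubar ∧
      ∀ (vseq : ℕ → Fin m → ℝ), (∀ k, vseq k ∈ U) →
        ∀ (yv : ℝ → EuclideanSpace ℝ (Fin d)), IsTrajN d m f0 f x tg yv vseq →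
          JcostE d m lam γ p q yd tg ybar ubar ≤ JcostE d m lam γ p q yd tg yv vseq := by
  classical
  -- canonical trajectories
  have hexT : ∀ v : ℕ → Fin m → ℝ, ∃ y, IsTrajN d m f0 f x tg y v :=
    fun v => exists_traj (x := x) hf0 hf htg0 htgmono htginf v
  choose Y hY using hexT
  -- uniform Lipschitz constant over U
  obtain ⟨r0, hr0⟩ := hUc.exists_bound_of_continuousOn continuous_id.continuousOn
  have hrw : ∀ w ∈ U, ∀ i, |w i| ≤ max r0 0 := by
    intro w hw i
    calc |w i| = ‖w i‖ := (Real.norm_eq_abs _).symm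
      _ ≤ ‖w‖ := norm_le_pi_norm w i
      _ ≤ r0 := hr0 w hw
      _ ≤ max r0 0 := le_max_left _ _
  have hr_nn : (0:ℝ) ≤ max r0 0 := le_max_right _ _
  have hKUr_nn : (0:ℝ) ≤ (L : ℝ) * (1 + m * max r0 0) + 1 := by positivity
  set KU : ℝ≥0 := Real.toNNReal ((L : ℝ) * (1 + m * max r0 0) + 1) with hKUdef
  have hKUco : (KU : ℝ) = (L : ℝ) * (1 + m * max r0 0) + 1 := Real.coe_toNNReal _ hKUr_nn
  have hKUpos : 0 < (KU : ℝ) := by rw [hKUco]; positivity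
  have hKUlip : ∀ w ∈ U, LipschitzWith KU (gvf f0 f w) := by
    intro w hw
    apply (gvf_lip hf0 hf w).weaken
    rw [← NNReal.coe_le_coe, hKUco, Kof_coe]
    have hsum : ∑ i, |w i| ≤ (m : ℝ) * max r0 0 := by
      calc ∑ i, |w i| ≤ ∑ _i : Fin m, max r0 0 := Finset.sum_le_sum (fun i _ => hrw w hw i)
        _ = m * max r0 0 := by
          rw [Finset.sum_const, Finset.card_univ, Fintype.card_fin, nsmul_eq_mul]
    nlinarith [L.coe_nonneg]
  -- bound on the drift at the origin, uniformly over U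
  have hg0c : Continuous (fun w : Fin m → ℝ => gvf f0 f w 0) := by
    unfold gvf
    exact continuous_const.add
      (continuous_finset_sum _ fun i _ => (continuous_apply i).smul continuous_const)
  obtain ⟨C0', hC0'⟩ := hUc.exists_bound_of_continuousOn hg0c.continuousOn
  have hC0b : ∀ w ∈ U, ‖gvf f0 f w 0‖ ≤ max C0' 0 := fun w hw =>
    le_trans (hC0' w hw) (le_max_left _ _)
  have hC0nn : (0:ℝ) ≤ max C0' 0 := le_max_right _ _
  -- a priori bound for all admissible controls
  have hbound : ∀ v : ℕ → Fin m → ℝ, (∀ k, v k ∈ U) →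
      ∀ n, ∀ t ∈ Icc (0:ℝ) (tg n), ‖Y v t‖ ≤ RbSeq ‖x‖ KU (max C0' 0) tg n :=
    fun v hv => apriori_bound hf0 hf htg0 htgmono KU hKUpos (max C0' 0) hC0nn v
      (fun k => ⟨hKUlip _ (hv k), hC0b _ (hv k)⟩) (Y v) (hY v)
  -- the penalty function
  have hPc : Continuous (fun w : Fin m → ℝ => (∑ i, |w i| ^ p) ^ (q / p)) := by
    apply Continuous.rpow_const
    · exact continuous_finset_sum _ fun i _ =>
        Continuous.rpow_const (continuous_abs.comp (continuous_apply i)) (fun _ => Or.inr hp0.le)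
    · intro w; exact Or.inr (div_nonneg (le_trans hp0.le hpq) hp0.le)
  have hPnn : ∀ w : Fin m → ℝ, 0 ≤ (∑ i, |w i| ^ p) ^ (q / p) := fun w =>
    Real.rpow_nonneg (Finset.sum_nonneg fun i _ => Real.rpow_nonneg (abs_nonneg _) _) _
  obtain ⟨MP', hMP'⟩ := hUc.exists_bound_of_continuousOn hPc.continuousOn
  have hMP : ∀ w ∈ U, (∑ i, |w i| ^ p) ^ (q / p) ≤ MP' := fun w hw =>
    le_trans (le_abs_self _) (le_of_eq_of_le (Real.norm_eq_abs _).symm (hMP' w hw))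
  -- cost of any admissible trajectory equals the cost of the canonical one
  have hJY : ∀ (v : ℕ → Fin m → ℝ) (yv : ℝ → EuclideanSpace ℝ (Fin d)),
      IsTrajN d m f0 f x tg yv v →
      JcostE d m lam γ p q yd tg yv v = JcostE d m lam γ p q yd tg (Y v) v := by
    intro v yv hyv
    have hEq := traj_uniqueT hf0 hf htg0 htgmono htginf v yv (Y v) hyv (hY v)
    simp only [JcostE]
    congr 1
    apply setLIntegral_congr_fun_ae measurableSet_Ioi
    apply ae_of_all
    intro t ht
    rw [hEq (show t ∈ Ici (0:ℝ) from mem_Ici.mpr (le_of_lt (mem_Ioi.mp ht)))]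
  -- the two cost terms
  set At : (ℕ → Fin m → ℝ) → ℝ≥0∞ := fun v => ∫⁻ t in Ioi (0:ℝ),
    ENNReal.ofReal (Real.exp (-lam * t) * (1 / 2) * ‖Y v t - yd‖ ^ 2) with hAt
  set Bt : (ℕ → Fin m → ℝ) → ℝ≥0∞ := fun v =>
    ENNReal.ofReal (γ * ∑' k, bcoef lam tg k * (∑ i, |v k i| ^ p) ^ (q / p)) with hBt
  set Φ : (ℕ → Fin m → ℝ) → ℝ≥0∞ := fun v => JcostE d m lam γ p q yd tg (Y v) v with hΦdef
  have hΦdecomp : ∀ v, Φ v = At v + Bt v := fun v => rfl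
  set Sset : Set (ℕ → Fin m → ℝ) := {v | ∀ k, v k ∈ U} with hSdef
  set c := sInf (Φ '' Sset) with hc
  by_cases hctop : c = ⊤
  · refine ⟨fun _ => hUne.some, Y (fun _ => hUne.some), fun _ => hUne.some_mem, hY _, ?_⟩
    intro vseq hvs yv hyv
    have h1 : Φ vseq = ⊤ := sInf_eq_top.mp hctop _ ⟨vseq, hvs, rfl⟩
    rw [hJY vseq yv hyv]
    show Φ (fun _ => hUne.some) ≤ Φ vseq
    rw [h1]; exact le_top
  -- minimizing sequence
  have hseq : ∀ j : ℕ, ∃ v, (∀ k, v k ∈ U) ∧ Φ v < c + ENNReal.ofReal (1 / ((j:ℝ) + 1)) := by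
    intro j
    have hlt : c < c + ENNReal.ofReal (1 / ((j:ℝ) + 1)) := by
      apply ENNReal.lt_add_right hctop
      rw [← ENNReal.ofReal_zero]
      intro hcontra
      have h2 : (1 : ℝ) / ((j:ℝ) + 1) ≤ 0 := by
        by_contra h3
        push_neg at h3
        rw [ENNReal.ofReal_eq_ofReal_iff (le_of_lt h3) le_rfl] at hcontra
        · exact absurd hcontra (by positivity)
      have : (0:ℝ) < 1 / ((j:ℝ) + 1) := by positivity
      linarith
    obtain ⟨a, ⟨v, hv, rfl⟩, hav⟩ := sInf_lt_iff.mp hlt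
    exact ⟨v, hv, hav⟩
  choose w hwU hwlt using hseq
  -- compactness: extract a convergent subsequence of controls
  have hScomp : IsCompact Sset := by
    have hSeq : Sset = Set.pi Set.univ (fun _ : ℕ => U) := by
      ext v; simp [hSdef, Set.mem_pi]
    rw [hSeq]
    exact isCompact_univ_pi (fun _ => hUc)
  obtain ⟨vbar, hvbarS, φ, hφ, hconv⟩ := hScomp.isSeqCompact (x := w) (fun j => hwU j)
  have hconvk : ∀ k, Tendsto (fun j => w (φ j) k) atTop (𝓝 (vbar k)) :=
    fun k => tendsto_pi_nhds.mp hconv k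
  have hvbarU : ∀ k, vbar k ∈ U := hvbarS
  -- pointwise convergence of trajectories
  have hdep : ∀ t : ℝ, 0 ≤ t → Tendsto (fun j => Y (w (φ j)) t) atTop (𝓝 (Y vbar t)) := by
    intro t ht
    obtain ⟨n, hn⟩ : ∃ n, t ≤ tg n := (htginf.eventually (eventually_ge_atTop t)).exists
    refine traj_dep hf0 hf htg0 htgmono KU hKUpos (fun j => w (φ j)) vbar
      (fun j => Y (w (φ j))) (Y vbar) (fun j => hY _) (hY _)
      (fun k => hKUlip _ (hvbarU k)) hconvk ?_ n t ⟨ht, hn⟩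
    intro n'
    refine ⟨(∑ i, ‖f i 0‖) + (L : ℝ) * RbSeq ‖x‖ KU (max C0' 0) tg (n' + 1), ?_, ?_⟩
    · have := RbSeq_nonneg (norm_nonneg x) hKUpos hC0nn htgmono (n' + 1)
      positivity
    · intro j s hs i
      have hs0 : s ∈ Icc (0:ℝ) (tg (n' + 1)) :=
        ⟨le_trans (htg0 ▸ htgmono.monotone (Nat.zero_le n')) hs.1, hs.2⟩
      have hnorm : ‖Y (w (φ j)) s‖ ≤ RbSeq ‖x‖ KU (max C0' 0) tg (n' + 1) :=
        hbound _ (hwU _) (n' + 1) s hs0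
      have h1 : ‖f i (Y (w (φ j)) s) - f i 0‖ ≤ (L : ℝ) * ‖Y (w (φ j)) s‖ := by
        have h := (hf i).dist_le_mul (Y (w (φ j)) s) 0
        rwa [dist_eq_norm, dist_eq_norm, sub_zero] at h
      have h2 : ‖f i 0‖ ≤ ∑ i', ‖f i' 0‖ :=
        Finset.single_le_sum (f := fun i' => ‖f i' 0‖) (fun i' _ => norm_nonneg _) (Finset.mem_univ i)
      have h3 : ‖f i (Y (w (φ j)) s)‖ ≤ ‖f i 0‖ + ‖f i (Y (w (φ j)) s) - f i 0‖ := by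
        have := norm_add_le (f i 0) (f i (Y (w (φ j)) s) - f i 0)
        simpa using this
      nlinarith [L.coe_nonneg, norm_nonneg (Y (w (φ j)) s)]
  -- measurability of the running-cost integrand
  have hmeas : ∀ v : ℕ → Fin m → ℝ,
      AEMeasurable (fun t => ENNReal.ofReal (Real.exp (-lam * t) * (1 / 2) * ‖Y v t - yd‖ ^ 2))
        (volume.restrict (Ioi (0:ℝ))) := by
    intro v
    apply ENNReal.measurable_ofReal.comp_aemeasurable
    apply AEMeasurable.mul
    · exact ((Real.continuous_exp.comp (continuous_const.mul continuous_id)).mul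
        continuous_const).aemeasurable
    · have hYm : AEMeasurable (Y v) (volume.restrict (Ioi (0:ℝ))) :=
        ContinuousOn.aemeasurable ((hY v).2.1.mono (fun s (hs : s ∈ Ioi (0:ℝ)) => mem_Ici.mpr (le_of_lt hs))) measurableSet_Ioi
      exact ((((continuous_id.sub continuous_const).norm).pow 2).measurable).comp_aemeasurable hYm
  -- lower semicontinuity of the running cost term
  have hA : At vbar ≤ liminf (fun j => At (w (φ j))) atTop := by
    have hptw : ∀ t ∈ Ioi (0:ℝ),
        ENNReal.ofReal (Real.exp (-lam * t) * (1 / 2) * ‖Y vbar t - yd‖ ^ 2)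
        = liminf (fun j =>
            ENNReal.ofReal (Real.exp (-lam * t) * (1 / 2) * ‖Y (w (φ j)) t - yd‖ ^ 2)) atTop := by
      intro t ht
      have h1 := hdep t (le_of_lt ht)
      have h2 : Tendsto (fun j =>
          ENNReal.ofReal (Real.exp (-lam * t) * (1 / 2) * ‖Y (w (φ j)) t - yd‖ ^ 2)) atTop
          (𝓝 (ENNReal.ofReal (Real.exp (-lam * t) * (1 / 2) * ‖Y vbar t - yd‖ ^ 2))) := by
        apply (ENNReal.continuous_ofReal.tendsto _).comp
        exact Tendsto.const_mul _ (((h1.sub tendsto_const_nhds).norm).pow 2)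
      exact h2.liminf_eq.symm
    calc At vbar = ∫⁻ t in Ioi (0:ℝ), liminf (fun j =>
          ENNReal.ofReal (Real.exp (-lam * t) * (1 / 2) * ‖Y (w (φ j)) t - yd‖ ^ 2)) atTop := by
          rw [hAt]
          exact setLIntegral_congr_fun_ae measurableSet_Ioi (ae_of_all _ hptw)
      _ ≤ liminf (fun j => At (w (φ j))) atTop := lintegral_liminf_le' (fun j => hmeas _)
  -- lower semicontinuity of the penalty term
  have hre : ∀ v : ℕ → Fin m → ℝ, (∀ k, v k ∈ U) →
      Bt v = ∑' k, ENNReal.ofReal (γ * (bcoef lam tg k * (∑ i, |v k i| ^ p) ^ (q / p))) :=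
    fun v hv => ofReal_tsum_bcoef hlam htg0 htgmono hγ _ (fun k => hPnn (v k))
      (fun k => hMP _ (hv k))
  have hB : Bt vbar ≤ liminf (fun j => Bt (w (φ j))) atTop := by
    rw [hre vbar hvbarU]
    have hterm : ∀ k : ℕ, ENNReal.ofReal (γ * (bcoef lam tg k * (∑ i, |vbar k i| ^ p) ^ (q / p)))
        = liminf (fun j => ENNReal.ofReal
            (γ * (bcoef lam tg k * (∑ i, |w (φ j) k i| ^ p) ^ (q / p)))) atTop := by
      intro k
      have h1 : Tendsto (fun j => (∑ i, |w (φ j) k i| ^ p) ^ (q / p)) atTop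
          (𝓝 ((∑ i, |vbar k i| ^ p) ^ (q / p))) := (hPc.tendsto _).comp (hconvk k)
      have h2 : Tendsto (fun j => ENNReal.ofReal
          (γ * (bcoef lam tg k * (∑ i, |w (φ j) k i| ^ p) ^ (q / p)))) atTop
          (𝓝 (ENNReal.ofReal (γ * (bcoef lam tg k * (∑ i, |vbar k i| ^ p) ^ (q / p))))) := by
        apply (ENNReal.continuous_ofReal.tendsto _).comp
        exact Tendsto.const_mul _ (Tendsto.const_mul _ h1)
      exact h2.liminf_eq.symm
    calc ∑' k, ENNReal.ofReal (γ * (bcoef lam tg k * (∑ i, |vbar k i| ^ p) ^ (q / p)))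
        = ∑' k, liminf (fun j => ENNReal.ofReal
            (γ * (bcoef lam tg k * (∑ i, |w (φ j) k i| ^ p) ^ (q / p)))) atTop :=
          tsum_congr hterm
      _ ≤ liminf (fun j => ∑' k, ENNReal.ofReal
            (γ * (bcoef lam tg k * (∑ i, |w (φ j) k i| ^ p) ^ (q / p)))) atTop := tsum_liminf_le
      _ = liminf (fun j => Bt (w (φ j))) atTop := by
          have h3 : (fun j => ∑' k, ENNReal.ofReal
              (γ * (bcoef lam tg k * (∑ i, |w (φ j) k i| ^ p) ^ (q / p))))
              = fun j => Bt (w (φ j)) := funext fun j => (hre _ (hwU _)).symm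
          rw [h3]
  -- liminf of the minimizing sequence is at most c
  have hΦlim : liminf (fun j => Φ (w (φ j))) atTop ≤ c := by
    have hev : ∀ j, Φ (w (φ j)) ≤ c + ENNReal.ofReal (1 / ((φ j : ℝ) + 1)) :=
      fun j => (hwlt (φ j)).le
    have htend : Tendsto (fun j => c + ENNReal.ofReal (1 / ((φ j : ℝ) + 1))) atTop (𝓝 c) := by
      have h0 : Tendsto (fun j => ENNReal.ofReal (1 / ((φ j : ℝ) + 1))) atTop (𝓝 0) := by
        have hreal : Tendsto (fun n : ℕ => 1 / ((n : ℝ) + 1)) atTop (𝓝 0) :=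
          tendsto_one_div_add_atTop_nhds_zero_nat
        have := (ENNReal.continuous_ofReal.tendsto 0).comp (hreal.comp hφ.tendsto_atTop)
        simpa [Function.comp_def] using this
      have := Tendsto.add (tendsto_const_nhds (x := c)) h0
      simpa using this
    calc liminf (fun j => Φ (w (φ j))) atTop ≤ limsup (fun j => Φ (w (φ j))) atTop :=
          liminf_le_limsup
      _ ≤ limsup (fun j => c + ENNReal.ofReal (1 / ((φ j : ℝ) + 1))) atTop :=
          limsup_le_limsup (Eventually.of_forall hev)
      _ = c := htend.limsup_eq
  have hΦvbar : Φ vbar ≤ c := by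
    calc Φ vbar = At vbar + Bt vbar := hΦdecomp vbar
      _ ≤ liminf (fun j => At (w (φ j))) atTop + liminf (fun j => Bt (w (φ j))) atTop :=
          add_le_add hA hB
      _ ≤ liminf (fun j => At (w (φ j)) + Bt (w (φ j))) atTop := ennreal_liminf_add
      _ = liminf (fun j => Φ (w (φ j))) atTop := by
          have h4 : (fun j => At (w (φ j)) + Bt (w (φ j))) = fun j => Φ (w (φ j)) :=
            funext fun j => (hΦdecomp _).symm
          rw [h4]
      _ ≤ c := hΦlim
  refine ⟨vbar, Y vbar, hvbarU, hY vbar, ?_⟩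
  intro vseq hvs yv hyv
  have h1 : JcostE d m lam γ p q yd tg yv vseq = Φ vseq := hJY vseq yv hyv
  have h2 : c ≤ Φ vseq := sInf_le ⟨vseq, hvs, rfl⟩
  rw [h1]
  exact le_trans hΦvbar h2
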